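/- There is no guarded recursive specification over TSP whose process graph is bisimilar to the process graph of the always-accepting counter (states ℕ, all accepting, n →a n+1, n+1 →b n, root 0). -/

import Mathlib

structure LTS (S : Type*) (A : Type*) where
  Tr : S → A → S → Prop
  Acc : S → Prop

def IsBisimulation {S A : Type*} (L : LTS S A) (R : S → S → Prop) : Prop :=
  Symmetric R ∧ ∀ s t, R s t →
    (∀ a s', L.Tr s a s' → ∃ t', L.Tr t a t' ∧ R s' t') ∧
    (L.Acc s → L.Acc t)

def Bisimilar {S A : Type*} (L : LTS S A) (s t : S) : Prop :=
  ∃ R, IsBisimulation L R ∧ R s t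

/-- TSP process expressions: 0, 1, action prefix, choice, sequential
composition, and identifiers from `V`. -/
inductive Expr (A V : Type) where
  | zero | one
  | act (a : A) (p : Expr A V)
  | add (p q : Expr A V)
  | seq (p q : Expr A V)
  | var (X : V)

/-- The acceptance predicate ↓ for TSP, relative to a specification Δ. -/
inductive EAcc {A V : Type} (Δ : V → Expr A V) : Expr A V → Prop
  | one : EAcc Δ .one
  | addL {p q} : EAcc Δ p → EAcc Δ (Expr.add p q)
  | addR {p q} : EAcc Δ q → EAcc Δ (Expr.add p q)
  | seq {p q} : EAcc Δ p → EAcc Δ q → EAcc Δ (Expr.seq p q)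
  | var {X} : EAcc Δ (Δ X) → EAcc Δ (.var X)

/-- The TSP transition relation (with the transparent rule: if `p↓` and
`q →a q'` then `p·q →a q'`). -/
inductive EStep {A V : Type} (Δ : V → Expr A V) : Expr A V → A → Expr A V → Prop
  | act {a p} : EStep Δ (.act a p) a p
  | addL {p q a p'} : EStep Δ p a p' → EStep Δ (Expr.add p q) a p'
  | addR {p q a q'} : EStep Δ q a q' → EStep Δ (Expr.add p q) a q'
  | seqL {p q a p'} : EStep Δ p a p' → EStep Δ (Expr.seq p q) a (p'.seq q)
  | seqR {p q a q'} : EAcc Δ p → EStep Δ q a q' → EStep Δ (Expr.seq p q) a q'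
  | var {X a p'} : EStep Δ (Δ X) a p' → EStep Δ (.var X) a p'

def exprLTS {A V : Type} (Δ : V → Expr A V) : LTS (Expr A V) A :=
  ⟨EStep Δ, EAcc Δ⟩

/-- A bisimulation between the states of two labelled transition systems. -/
def IsBisimulation2 {S T A : Type*} (L : LTS S A) (L' : LTS T A)
    (R : S → T → Prop) : Prop :=
  ∀ s t, R s t →
    (∀ a s', L.Tr s a s' → ∃ t', L'.Tr t a t' ∧ R s' t') ∧
    (∀ a t', L'.Tr t a t' → ∃ s', L.Tr s a s' ∧ R s' t') ∧
    (L.Acc s ↔ L'.Acc t)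

def Bisimilar2 {S T A : Type*} (L : LTS S A) (L' : LTS T A) (s : S) (t : T) : Prop :=
  ∃ R, IsBisimulation2 L L' R ∧ R s t
/-- An expression is guarded if every occurrence of an identifier lies within
the scope of an action prefix. -/
inductive EGuarded {A V : Type} : Expr A V → Prop
  | zero : EGuarded .zero
  | one : EGuarded .one
  | act (a : A) (p : Expr A V) : EGuarded (.act a p)
  | add {p q} : EGuarded p → EGuarded q → EGuarded (Expr.add p q)
  | seq {p q} : EGuarded p → EGuarded q → EGuarded (Expr.seq p q)
inductive Lab where
  | a | b

/-- The always-accepting counter: states ℕ, all accepting, `n →a n+1`, `n+1 →b n`. -/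
def counter : LTS ℕ Lab :=
  { Tr := fun m l n => (l = .a ∧ n = m + 1) ∨ (l = .b ∧ m = n + 1)
    Acc := fun _ => True }

section CounterImpossibility

/-- Subterm relation on expressions. -/
inductive ESub {A V : Type} : Expr A V → Expr A V → Prop
  | refl (e) : ESub e e
  | act {s a p} : ESub s p → ESub s (Expr.act a p)
  | addL {s p q} : ESub s p → ESub s (Expr.add p q)
  | addR {s p q} : ESub s q → ESub s (Expr.add p q)
  | seqL {s p q} : ESub s p → ESub s (Expr.seq p q)
  | seqR {s p q} : ESub s q → ESub s (Expr.seq p q)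

lemma ESub.trans' {A V : Type} {s t e : Expr A V} (h1 : ESub s t) (h2 : ESub t e) : ESub s e := by
  induction h2 with
  | refl => exact h1
  | act _ ih => exact ESub.act ih
  | addL _ ih => exact ESub.addL ih
  | addR _ ih => exact ESub.addR ih
  | seqL _ ih => exact ESub.seqL ih
  | seqR _ ih => exact ESub.seqR ih

lemma sub_finite {A V : Type} : ∀ e : Expr A V, {s | ESub s e}.Finite := by
  intro e
  induction e with
  | zero =>
      refine (Set.finite_singleton Expr.zero).subset ?_
      intro s hs; cases hs; rfl
  | one =>
      refine (Set.finite_singleton Expr.one).subset ?_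
      intro s hs; cases hs; rfl
  | act a p ih =>
      refine (ih.insert (Expr.act a p)).subset ?_
      intro s hs; cases hs with
      | refl => exact Set.mem_insert _ _
      | act h => exact Set.mem_insert_of_mem _ h
  | add p q ihp ihq =>
      refine (((ihp.union ihq).insert (Expr.add p q))).subset ?_
      intro s hs; cases hs with
      | refl => exact Set.mem_insert _ _
      | addL h => exact Set.mem_insert_of_mem _ (Or.inl h)
      | addR h => exact Set.mem_insert_of_mem _ (Or.inr h)
  | seq p q ihp ihq =>
      refine (((ihp.union ihq).insert (Expr.seq p q))).subset ?_
      intro s hs; cases hs with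
      | refl => exact Set.mem_insert _ _
      | seqL h => exact Set.mem_insert_of_mem _ (Or.inl h)
      | seqR h => exact Set.mem_insert_of_mem _ (Or.inr h)
  | var X =>
      refine (Set.finite_singleton (Expr.var X)).subset ?_
      intro s hs; cases hs; rfl

/-- The leaves of the seq-tree structure of an expression. -/
def leaves {A V : Type} : Expr A V → Set (Expr A V)
  | Expr.zero => {Expr.zero}
  | Expr.one => {Expr.one}
  | Expr.act a p => {Expr.act a p}
  | Expr.add p q => {Expr.add p q}
  | Expr.seq p q => leaves p ∪ leaves q
  | Expr.var X => {Expr.var X}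

lemma leaves_sub {A V : Type} : ∀ e : Expr A V, ∀ s ∈ leaves e, ESub s e := by
  intro e
  induction e with
  | zero => intro s hs; cases hs; exact ESub.refl _
  | one => intro s hs; cases hs; exact ESub.refl _
  | act a p ih => intro s hs; cases hs; exact ESub.refl _
  | add p q ihp ihq => intro s hs; cases hs; exact ESub.refl _
  | seq p q ihp ihq =>
      intro s hs
      rcases hs with h | h
      · exact ESub.seqL (ihp s h)
      · exact ESub.seqR (ihq s h)
  | var X => intro s hs; cases hs; exact ESub.refl _

/-- The rightmost leaf of an expression. -/
def rlast {A V : Type} : Expr A V → Expr A V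
  | Expr.seq _ q => rlast q
  | e => e

lemma rlast_mem {A V : Type} : ∀ e : Expr A V, rlast e ∈ leaves e := by
  intro e
  induction e with
  | seq p q ihp ihq => exact Or.inr ihq
  | zero => exact rfl
  | one => exact rfl
  | act a p ih => exact rfl
  | add p q ihp ihq => exact rfl
  | var X => exact rfl

lemma rlast_acc {A V : Type} {Δ : V → Expr A V} :
    ∀ {e : Expr A V}, EAcc Δ e → EAcc Δ (rlast e) := by
  intro e
  induction e with
  | seq p q ihp ihq => intro h; cases h with | seq h1 h2 => exact ihq h2
  | zero => exact id
  | one => exact id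
  | act a p ih => exact id
  | add p q ihp ihq => exact id
  | var X => exact id

lemma rlast_step {A V : Type} {Δ : V → Expr A V} :
    ∀ {e : Expr A V} {l u}, EAcc Δ e → EStep Δ (rlast e) l u → EStep Δ e l u := by
  intro e
  induction e with
  | seq p q ihp ihq =>
      intro l u hacc hstep
      cases hacc with | seq h1 h2 => exact EStep.seqR h1 (ihq h2 hstep)
  | zero => intro l u _ h; exact h
  | one => intro l u _ h; exact h
  | act a p ih => intro l u _ h; exact h
  | add p q ihp ihq => intro l u _ h; exact h
  | var X => intro l u _ h; exact h

def esize {A V : Type} : Expr A V → ℕ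
  | Expr.zero => 1
  | Expr.one => 1
  | Expr.act _ p => esize p + 1
  | Expr.add p q => esize p + esize q + 1
  | Expr.seq p q => esize p + esize q + 1
  | Expr.var _ => 1

/-- `Del t y x` : `x` is `y` with one rightmost-spine occurrence of `t` deleted. -/
inductive Del {A V : Type} (t : Expr A V) : Expr A V → Expr A V → Prop
  | base (p) : Del t (Expr.seq p t) p
  | step {p q q'} : Del t q q' → Del t (Expr.seq p q) (Expr.seq p q')

lemma del_size {A V : Type} {t y x : Expr A V} (h : Del t y x) : esize x < esize y := by
  induction h with
  | base p => simp [esize]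
  | step _ ih => simp [esize]; omega

lemma del_leaves {A V : Type} {t y x : Expr A V} (h : Del t y x) : leaves x ⊆ leaves y := by
  induction h with
  | base p => exact Set.subset_union_left
  | step _ ih => exact Set.union_subset_union_right _ ih

lemma del_acc {A V : Type} {Δ : V → Expr A V} {t y x : Expr A V}
    (ht : EAcc Δ t) (h : Del t y x) : EAcc Δ y ↔ EAcc Δ x := by
  induction h with
  | base p =>
      constructor
      · intro h; cases h with | seq h1 h2 => exact h1
      · intro h; exact EAcc.seq h ht
  | step hd ih =>
      constructor
      · intro h; cases h with | seq h1 h2 => exact EAcc.seq h1 (ih.mp h2)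
      · intro h; cases h with | seq h1 h2 => exact EAcc.seq h1 (ih.mpr h2)

lemma del_mv1 {A V : Type} {Δ : V → Expr A V} {t y x : Expr A V} (hD : Del t y x) :
    ∀ {l z}, EStep Δ x l z → ∃ w, EStep Δ y l w ∧ (Del t w z ∨ w = z) := by
  induction hD with
  | base p =>
      intro l z h
      exact ⟨Expr.seq z t, EStep.seqL h, Or.inl (Del.base z)⟩
  | step hd ih =>
      intro l z h
      cases h with
      | seqL h' =>
          exact ⟨_, EStep.seqL h', Or.inl (Del.step hd)⟩
      | seqR hacc h' =>
          obtain ⟨w, hw, hdisj⟩ := ih h'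
          exact ⟨w, EStep.seqR hacc hw, hdisj⟩

lemma del_mv2 {A V : Type} {Δ : V → Expr A V} {t y x : Expr A V}
    (ht : ∀ l u, ¬ EStep Δ t l u) (hD : Del t y x) :
    ∀ {l w}, EStep Δ y l w → ∃ z, EStep Δ x l z ∧ (Del t w z ∨ w = z) := by
  induction hD with
  | base p =>
      intro l w h
      cases h with
      | seqL h' => exact ⟨_, h', Or.inl (Del.base _)⟩
      | seqR hacc h' => exact absurd h' (ht _ _)
  | step hd ih =>
      intro l w h
      cases h with
      | seqL h' => exact ⟨_, EStep.seqL h', Or.inl (Del.step hd)⟩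
      | seqR hacc h' =>
          obtain ⟨z, hz, hdisj⟩ := ih h'
          exact ⟨z, EStep.seqR hacc hz, hdisj⟩

lemma b2_fwd {S T A : Type*} {L : LTS S A} {L' : LTS T A} {s t}
    (h : Bisimilar2 L L' s t) {a s'} (hs : L.Tr s a s') :
    ∃ t', L'.Tr t a t' ∧ Bisimilar2 L L' s' t' := by
  obtain ⟨R, hR, hst⟩ := h
  obtain ⟨t', ht', hr⟩ := (hR s t hst).1 a s' hs
  exact ⟨t', ht', R, hR, hr⟩

lemma b2_bwd {S T A : Type*} {L : LTS S A} {L' : LTS T A} {s t}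
    (h : Bisimilar2 L L' s t) {a t'} (hs : L'.Tr t a t') :
    ∃ s', L.Tr s a s' ∧ Bisimilar2 L L' s' t' := by
  obtain ⟨R, hR, hst⟩ := h
  obtain ⟨s', hs', hr⟩ := (hR s t hst).2.1 a t' hs
  exact ⟨s', hs', R, hR, hr⟩

lemma b2_acc {S T A : Type*} {L : LTS S A} {L' : LTS T A} {s t}
    (h : Bisimilar2 L L' s t) : L.Acc s ↔ L'.Acc t := by
  obtain ⟨R, hR, hst⟩ := h
  exact (hR s t hst).2.2

lemma del_bisim {V : Type} {Δ : V → Expr Lab V} {t y x : Expr Lab V} {n : ℕ}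
    (htA : EAcc Δ t) (htN : ∀ l u, ¬ EStep Δ t l u) (hD : Del t y x)
    (hy : Bisimilar2 (exprLTS Δ) counter y n) :
    Bisimilar2 (exprLTS Δ) counter x n := by
  obtain ⟨R, hR, hyn⟩ := hy
  refine ⟨fun z m => R z m ∨ ∃ w, Del t w z ∧ R w m, ?_, Or.inr ⟨y, hD, hyn⟩⟩
  intro s m hsm
  rcases hsm with hsm | ⟨w, hwD, hwR⟩
  · obtain ⟨f, b, ac⟩ := hR s m hsm
    refine ⟨fun a s' hs => ?_, fun a m' hm => ?_, ac⟩
    · obtain ⟨m', hm', hr⟩ := f a s' hs; exact ⟨m', hm', Or.inl hr⟩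
    · obtain ⟨s', hs', hr⟩ := b a m' hm; exact ⟨s', hs', Or.inl hr⟩
  · refine ⟨fun a s' hs => ?_, fun a m' hm => ?_, ?_⟩
    · obtain ⟨w', hw', hdisj⟩ := del_mv1 hwD hs
      obtain ⟨m', hm', hr⟩ := (hR w m hwR).1 a w' hw'
      refine ⟨m', hm', ?_⟩
      rcases hdisj with hd | rfl
      · exact Or.inr ⟨w', hd, hr⟩
      · exact Or.inl hr
    · obtain ⟨w', hw', hr⟩ := (hR w m hwR).2.1 a m' hm
      obtain ⟨z, hz, hdisj⟩ := del_mv2 htN hwD hw'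
      refine ⟨z, hz, ?_⟩
      rcases hdisj with hd | rfl
      · exact Or.inr ⟨w', hd, hr⟩
      · exact Or.inl hr
    · exact ((del_acc htA hwD).symm).trans (hR w m hwR).2.2

lemma del_exists {A V : Type} :
    ∀ (q p : Expr A V), ∃ x, Del (rlast (Expr.seq p q)) (Expr.seq p q) x := by
  intro q
  induction q with
  | seq q1 q2 ih1 ih2 =>
      intro p
      obtain ⟨x, hx⟩ := ih2 q1
      exact ⟨Expr.seq p x, Del.step hx⟩
  | zero => intro p; exact ⟨p, Del.base p⟩
  | one => intro p; exact ⟨p, Del.base p⟩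
  | act a q ih => intro p; exact ⟨p, Del.base p⟩
  | add q1 q2 ih1 ih2 => intro p; exact ⟨p, Del.base p⟩
  | var X => intro p; exact ⟨p, Del.base p⟩

def succs {A V : Type} (Δ : V → Expr A V) (e : Expr A V) : Set (Expr A V) :=
  {e' | ∃ l, EStep Δ e l e'}

lemma succs_guarded_finite {A V : Type} {Δ : V → Expr A V} {e : Expr A V}
    (h : EGuarded e) : (succs Δ e).Finite := by
  induction h with
  | zero =>
      refine Set.finite_empty.subset ?_
      rintro x ⟨l, hs⟩; cases hs
  | one =>
      refine Set.finite_empty.subset ?_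
      rintro x ⟨l, hs⟩; cases hs
  | act a p =>
      refine (Set.finite_singleton p).subset ?_
      rintro x ⟨l, hs⟩; cases hs; rfl
  | add hp hq ihp ihq =>
      refine (ihp.union ihq).subset ?_
      rintro x ⟨l, hs⟩
      cases hs with
      | addL h => exact Or.inl ⟨l, h⟩
      | addR h => exact Or.inr ⟨l, h⟩
  | seq hp hq ihp ihq =>
      rename_i p q
      refine ((ihp.image (fun x => Expr.seq x q)).union ihq).subset ?_
      rintro x ⟨l, hs⟩
      cases hs with
      | seqL h => exact Or.inl ⟨_, ⟨l, h⟩, rfl⟩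
      | seqR hacc h => exact Or.inr ⟨l, h⟩

lemma succs_finite {A V : Type} {Δ : V → Expr A V} (hg : ∀ X, EGuarded (Δ X)) :
    ∀ e : Expr A V, (succs Δ e).Finite := by
  intro e
  induction e with
  | zero =>
      refine Set.finite_empty.subset ?_
      rintro x ⟨l, hs⟩; cases hs
  | one =>
      refine Set.finite_empty.subset ?_
      rintro x ⟨l, hs⟩; cases hs
  | act a p ih =>
      refine (Set.finite_singleton p).subset ?_
      rintro x ⟨l, hs⟩; cases hs; rfl
  | add p q ihp ihq =>
      refine (ihp.union ihq).subset ?_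
      rintro x ⟨l, hs⟩
      cases hs with
      | addL h => exact Or.inl ⟨l, h⟩
      | addR h => exact Or.inr ⟨l, h⟩
  | seq p q ihp ihq =>
      refine ((ihp.image (fun x => Expr.seq x q)).union ihq).subset ?_
      rintro x ⟨l, hs⟩
      cases hs with
      | seqL h => exact Or.inl ⟨_, ⟨l, h⟩, rfl⟩
      | seqR hacc h => exact Or.inr ⟨l, h⟩
  | var X =>
      refine (succs_guarded_finite (Δ := Δ) (hg X)).subset ?_
      rintro x ⟨l, hs⟩
      cases hs with
      | var h => exact ⟨l, h⟩

lemma counter_bisim_eq {Q : ℕ → ℕ → Prop} (hQ : IsBisimulation2 counter counter Q) :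
    ∀ m m', Q m m' → m = m' := by
  intro m
  induction m with
  | zero =>
      intro m' h
      cases m' with
      | zero => rfl
      | succ k =>
          obtain ⟨s', hs', -⟩ := (hQ 0 (k + 1) h).2.1 Lab.b k (Or.inr ⟨rfl, rfl⟩)
          rcases hs' with ⟨h1, -⟩ | ⟨-, h2⟩
          · exact Lab.noConfusion h1
          · omega
  | succ k ih =>
      intro m' h
      obtain ⟨t', ht', hq⟩ := (hQ (k + 1) m' h).1 Lab.b k (Or.inr ⟨rfl, rfl⟩)
      rcases ht' with ⟨h1, -⟩ | ⟨-, h2⟩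
      · exact Lab.noConfusion h1
      · have := ih t' hq; omega

lemma value_unique {S : Type*} {L : LTS S Lab} {u : S} {n n' : ℕ}
    (h1 : Bisimilar2 L counter u n) (h2 : Bisimilar2 L counter u n') : n = n' := by
  obtain ⟨R1, hR1, h1u⟩ := h1
  obtain ⟨R2, hR2, h2u⟩ := h2
  have hQ : IsBisimulation2 counter counter (fun m m' => ∃ v, R1 v m ∧ R2 v m') := by
    rintro m m' ⟨v, hv1, hv2⟩
    refine ⟨?_, ?_, Iff.rfl⟩
    · intro a k hk
      obtain ⟨v', hv', hr1⟩ := (hR1 v m hv1).2.1 a k hk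
      obtain ⟨k', hk', hr2⟩ := (hR2 v m' hv2).1 a v' hv'
      exact ⟨k', hk', v', hr1, hr2⟩
    · intro a k' hk'
      obtain ⟨v', hv', hr2⟩ := (hR2 v m' hv2).2.1 a k' hk'
      obtain ⟨k, hk, hr1⟩ := (hR1 v m hv1).1 a v' hv'
      exact ⟨k, hk, v', hr1, hr2⟩
  exact counter_bisim_eq hQ n n' ⟨u, h1u, h2u⟩

lemma step_leaves {A V : Type} {Δ : V → Expr A V} {T : Set (Expr A V)}
    (hTc : ∀ s t, ESub s t → t ∈ T → s ∈ T) (hTΔ : ∀ X s, ESub s (Δ X) → s ∈ T) :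
    ∀ {e l e'}, EStep Δ e l e' → leaves e ⊆ T → leaves e' ⊆ T := by
  intro e l e' h
  induction h with
  | act =>
      rename_i a p
      intro hle s hs
      exact hTc s _ (ESub.act (leaves_sub p s hs)) (hle rfl)
  | addL h ih =>
      rename_i p q l' p'
      intro hle
      refine ih ?_
      intro s hs
      exact hTc s _ (ESub.addL (leaves_sub p s hs)) (hle rfl)
  | addR h ih =>
      rename_i p q l' q'
      intro hle
      refine ih ?_
      intro s hs
      exact hTc s _ (ESub.addR (leaves_sub q s hs)) (hle rfl)
  | seqL h ih =>
      rename_i p q l' p'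
      intro hle
      have hp : leaves p ⊆ T := fun s hs => hle (Or.inl hs)
      have hq : leaves q ⊆ T := fun s hs => hle (Or.inr hs)
      intro s hs
      rcases hs with hs | hs
      · exact ih hp hs
      · exact hq hs
  | seqR hacc h ih =>
      intro hle
      exact ih (fun s hs => hle (Or.inr hs))
  | var h ih =>
      rename_i X l' p'
      intro hle
      exact ih (fun s hs => hTΔ X s (leaves_sub _ s hs))

lemma esize_pos {A V : Type} : ∀ e : Expr A V, 0 < esize e := by
  intro e; cases e <;> simp [esize]

lemma descent {V : Type} {Δ : V → Expr Lab V} {T : Set (Expr Lab V)} :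
    ∀ (N : ℕ) (e : Expr Lab V), esize e ≤ N → EAcc Δ e → leaves e ⊆ T →
      ∀ n, Bisimilar2 (exprLTS Δ) counter e n →
      ∃ t ∈ T, ∃ l u, EStep Δ t l u ∧ ∃ m, Bisimilar2 (exprLTS Δ) counter u m ∧ n ≤ m + 1 := by
  intro N
  induction N with
  | zero => intro e hsz; have := esize_pos e; omega
  | succ N ih =>
      intro e hsz hacc hle n hbis
      by_cases hstep : ∃ l u, EStep Δ (rlast e) l u
      · obtain ⟨l, u, hu⟩ := hstep
        have he : EStep Δ e l u := rlast_step hacc hu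
        obtain ⟨m, hm, hbm⟩ := b2_fwd hbis he
        refine ⟨rlast e, hle (rlast_mem e), l, u, hu, m, hbm, ?_⟩
        rcases hm with ⟨-, hm⟩ | ⟨-, hm⟩ <;> omega
      · push_neg at hstep
        obtain ⟨e', he', -⟩ :=
          b2_bwd hbis (show counter.Tr n Lab.a (n + 1) from Or.inl ⟨rfl, rfl⟩)
        cases e with
        | seq p q =>
            obtain ⟨x, hx⟩ := del_exists q p
            have htA : EAcc Δ (rlast (Expr.seq p q)) := rlast_acc hacc
            have hbx := del_bisim htA hstep hx hbis
            have haccx : EAcc Δ x := (del_acc htA hx).mp hacc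
            have hlex : leaves x ⊆ T := (del_leaves hx).trans hle
            have hszx : esize x ≤ N := by
              have := del_size hx; omega
            exact ih x hszx haccx hlex n hbx
        | zero => exact absurd he' (hstep Lab.a e')
        | one => exact absurd he' (hstep Lab.a e')
        | act a p => exact absurd he' (hstep Lab.a e')
        | add p q => exact absurd he' (hstep Lab.a e')
        | var X => exact absurd he' (hstep Lab.a e')

end CounterImpossibility

/-- there is no guarded recursive specification over TSP whose
process graph is bisimilar to the process graph of the always-accepting
counter (root 0). -/
theorem no_guarded_tsp_spec_for_counter (V : Type) [Finite V]
    (Δ : V → Expr Lab V) (hg : ∀ X, EGuarded (Δ X)) (X₀ : V) :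
    ¬ Bisimilar2 (exprLTS Δ) counter (.var X₀) 0 := by
  intro hbis
  classical
  set T : Set (Expr Lab V) :=
    {s | ESub s (Expr.var X₀)} ∪ ⋃ X, {s | ESub s (Δ X)} with hTdef
  have hTc : ∀ s t, ESub s t → t ∈ T → s ∈ T := by
    intro s t hst ht
    rcases ht with h | h
    · exact Or.inl (ESub.trans' hst h)
    · obtain ⟨X, hX⟩ := Set.mem_iUnion.mp h
      exact Or.inr (Set.mem_iUnion.mpr ⟨X, ESub.trans' hst hX⟩)
  have hTΔ : ∀ X s, ESub s (Δ X) → s ∈ T := by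
    intro X s h
    exact Or.inr (Set.mem_iUnion.mpr ⟨X, h⟩)
  have hTfin : T.Finite :=
    (sub_finite _).union (Set.finite_iUnion fun X => sub_finite (Δ X))
  have hT0 : leaves (Expr.var X₀ : Expr Lab V) ⊆ T := by
    intro s hs
    cases hs
    exact Or.inl (ESub.refl _)
  -- for every n there is a reachable expression bisimilar to n
  have reach : ∀ n : ℕ, ∃ e : Expr Lab V,
      leaves e ⊆ T ∧ Bisimilar2 (exprLTS Δ) counter e n := by
    intro n
    induction n with
    | zero => exact ⟨Expr.var X₀, hT0, hbis⟩
    | succ k ihk =>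
        obtain ⟨e, hle, hb⟩ := ihk
        obtain ⟨e', he', hb'⟩ :=
          b2_bwd hb (show counter.Tr k Lab.a (k + 1) from Or.inl ⟨rfl, rfl⟩)
        exact ⟨e', step_leaves hTc hTΔ he' hle, hb'⟩
  -- the finite set of one-step successors of elements of T
  set Succ : Set (Expr Lab V) := ⋃ t ∈ T, succs Δ t with hSdef
  have hSfin : Succ.Finite := hTfin.biUnion fun t _ => succs_finite hg t
  set M : Set ℕ := ⋃ u ∈ Succ, {m | Bisimilar2 (exprLTS Δ) counter u m} with hMdef
  have hMfin : M.Finite := by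
    refine hSfin.biUnion fun u _ => Set.Subsingleton.finite ?_
    intro m hm m' hm'
    exact value_unique hm hm'
  have key : ∀ n : ℕ, ∃ m ∈ M, n ≤ m + 1 := by
    intro n
    obtain ⟨e, hle, hb⟩ := reach n
    have hacc : EAcc Δ e := (b2_acc hb).mpr trivial
    obtain ⟨t, htT, l, u, hu, m, hbm, hnm⟩ :=
      descent (esize e) e le_rfl hacc hle n hb
    refine ⟨m, ?_, hnm⟩
    refine Set.mem_biUnion (Set.mem_biUnion htT ⟨l, hu⟩) hbm
  obtain ⟨N, hN⟩ := hMfin.bddAbove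
  obtain ⟨m, hmM, hnm⟩ := key (N + 2)
  have := hN hmM
  omega
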